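/- First-order 2D Godunov–Ryabenkii obstruction: let μ_x ∈ (0,1), μ_y > 0, μ_x + μ_y < 1, and let z ∈ ℂ with |z| > 1 and θ ∈ ℝ with sin θ ≠ 0. If the quantity κ_s⁰(z) + 2i sin θ · κ_s¹(z), where κ_s¹(z) is defined by (z² - 1 + 2μ_x z κ_s⁰(z)) κ_s¹(z) = -μ_y z κ_s⁰(z), is a root of the 2D characteristic equation (z²-1)κ + μ_x z (κ²-1) + 2iμ_y sin θ · z κ = 0, then (2i sin θ)² z κ_s¹(z) (μ_y + μ_x κ_s¹(z)) = 0. -/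
import Mathlib


/-- First-order 2D Godunov–Ryabenkii obstruction: if the first-order expansion
`κ_s⁰(z) + 2i sin θ · κ_s¹(z)` is a root of the 2D leap-frog characteristic
equation, then `(2i sin θ)² z κ_s¹(z) (μ_y + μ_x κ_s¹(z)) = 0`. -/
theorem first_order_gr_obstruction (μx μy : ℝ) (hμx0 : 0 < μx) (hμx1 : μx < 1)
    (hμy : 0 < μy) (hcfl : μx + μy < 1)
    (z : ℂ) (hz : 1 < ‖z‖) (θ : ℝ) (hθ : Real.sin θ ≠ 0)
    (κs0 : ℂ) (hκs0_root : κs0 ^ 2 + ((z - z⁻¹) / (μx : ℂ)) * κs0 - 1 = 0)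
    (hκs0_stable : ‖κs0‖ < 1)
    (κs1 : ℂ) (hκs1 : (z ^ 2 - 1 + 2 * (μx : ℂ) * z * κs0) * κs1 = -(μy : ℂ) * z * κs0)
    (hroot : (z ^ 2 - 1) * (κs0 + 2 * Complex.I * (Real.sin θ : ℂ) * κs1)
        + (μx : ℂ) * z * ((κs0 + 2 * Complex.I * (Real.sin θ : ℂ) * κs1) ^ 2 - 1)
        + 2 * Complex.I * (μy : ℂ) * (Real.sin θ : ℂ) * z
          * (κs0 + 2 * Complex.I * (Real.sin θ : ℂ) * κs1) = 0) :
    (2 * Complex.I * (Real.sin θ : ℂ)) ^ 2 * z * κs1 * ((μy : ℂ) + (μx : ℂ) * κs1)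
      = 0 := by
  have hz0 : z ≠ 0 := by
    intro h
    
    norm_num [h] at hz
  have hμx0' : (μx : ℂ) ≠ 0 := by exact_mod_cast hμx0.ne'
  have h0 : (z ^ 2 - 1) * κs0 + (μx : ℂ) * z * (κs0 ^ 2 - 1) = 0 := by
    field_simp at hκs0_root
    linear_combination hκs0_root
  linear_combination hroot - h0 - (2 * Complex.I * (Real.sin θ : ℂ)) * hκs1
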